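/- Let γ be a standard real Gaussian random variable (law N(0,1)) and let 0 ≤ t < 1/2. Then E[exp(γ²/4) · 1{γ > t}] / P(γ > t) = √2 · P(γ ≥ t/√2) / P(γ ≥ t), and this quantity is at most 2. Consequently, the law of γ conditioned on {γ > t} is subgaussian with Orlicz ψ₂-norm at most 2. -/

import Mathlib

open MeasureTheory ProbabilityTheory Real Set

lemma g_sing (a : ℝ) : gaussianReal 0 1 {a} = 0 :=
  gaussianReal_absolutelyContinuous 0 one_ne_zero (by simp)

lemma g_Ici_eq_Ioi (a : ℝ) : gaussianReal 0 1 (Ici a) = gaussianReal 0 1 (Ioi a) := by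
  have h : (Ici a : Set ℝ) = Ioi a ∪ {a} := by
    ext x; simp [le_iff_lt_or_eq, or_comm, eq_comm]
  rw [h]
  refine le_antisymm ?_ (measure_mono Set.subset_union_left)
  calc gaussianReal 0 1 (Ioi a ∪ {a}) ≤ gaussianReal 0 1 (Ioi a) + gaussianReal 0 1 {a} :=
        measure_union_le _ _
    _ = gaussianReal 0 1 (Ioi a) := by rw [g_sing, add_zero]

lemma pdf_mul_exp (x : ℝ) :
    gaussianPDFReal 0 1 x * Real.exp (x ^ 2 / 4) = Real.sqrt 2 * gaussianPDFReal 0 2 x := by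
  simp only [gaussianPDFReal, sub_zero, NNReal.coe_one, NNReal.coe_ofNat, mul_one]
  have h4 : Real.sqrt (2 * π * 2) = Real.sqrt 2 * Real.sqrt (2 * π) := by
    rw [mul_comm (2 * π) 2, Real.sqrt_mul (by norm_num)]
  have hπ : (0:ℝ) < Real.sqrt (2 * π) := Real.sqrt_pos.mpr (by positivity)
  have h2 : (0:ℝ) < Real.sqrt 2 := Real.sqrt_pos.mpr (by norm_num)
  rw [h4, mul_inv, mul_assoc, ← Real.exp_add,
    show -x^2/2 + x^2/4 = -x^2/(2*2) by ring]
  field_simp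

lemma hg_withDensity : gaussianReal 0 1
    = volume.withDensity (fun x => ((gaussianPDFReal 0 1 x).toNNReal : ENNReal)) := by
  rw [gaussianReal_of_var_ne_zero 0 one_ne_zero]; rfl

lemma gmap_sqrt2 : (gaussianReal 0 1).map (fun x => Real.sqrt 2 * x) = gaussianReal 0 2 := by
  have hmap := gaussianReal_map_const_mul (μ := 0) (v := 1) (Real.sqrt 2)
  have hv : (NNReal.mk (Real.sqrt 2 ^ 2) (sq_nonneg _) * 1 : NNReal) = 2 := by
    ext
    push_cast
    rw [mul_one]
    exact Real.sq_sqrt (by norm_num)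
  rw [mul_zero, hv] at hmap
  exact hmap

lemma numerator (t : ℝ) :
    (∫ x in Set.Ioi t, Real.exp (x ^ 2 / 4) ∂(gaussianReal 0 1)) =
      Real.sqrt 2 * ((gaussianReal 0 1) (Set.Ici (t / Real.sqrt 2))).toReal := by
  have h2 : (0:ℝ) < Real.sqrt 2 := Real.sqrt_pos.mpr (by norm_num)
  conv_lhs => rw [hg_withDensity]
  rw [setIntegral_withDensity_eq_setIntegral_smul
    ((measurable_gaussianPDFReal 0 1).real_toNNReal) _ measurableSet_Ioi]
  simp only [NNReal.smul_def, smul_eq_mul, Real.coe_toNNReal _ (gaussianPDFReal_nonneg 0 1 _),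
    pdf_mul_exp]
  rw [MeasureTheory.integral_const_mul]
  have hint : ((gaussianReal 0 2) (Set.Ioi t)).toReal = ∫ x in Set.Ioi t, gaussianPDFReal 0 2 x := by
    rw [gaussianReal_apply_eq_integral 0 (by norm_num) _,
      ENNReal.toReal_ofReal (integral_nonneg fun x => gaussianPDFReal_nonneg _ _ _)]
  rw [← hint, ← gmap_sqrt2, Measure.map_apply (measurable_const_mul _) measurableSet_Ioi]
  have hpre : (fun x => Real.sqrt 2 * x) ⁻¹' (Set.Ioi t) = Set.Ioi (t / Real.sqrt 2) := by
    ext x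
    simp only [Set.mem_preimage, Set.mem_Ioi]
    rw [div_lt_iff₀ h2, mul_comm]
  rw [hpre, g_Ici_eq_Ioi]

lemma half : ((gaussianReal 0 1) (Set.Ici 0)).toReal = 1/2 := by
  have hneg : (gaussianReal 0 1).map (fun x => (-1 : ℝ) * x) = gaussianReal 0 1 := by
    have hmap := gaussianReal_map_const_mul (μ := 0) (v := 1) (-1 : ℝ)
    have hv : (NNReal.mk ((-1:ℝ) ^ 2) (sq_nonneg _) * 1 : NNReal) = 1 := by ext; norm_num
    rw [mul_zero, hv] at hmap
    exact hmap
  have hIio : gaussianReal 0 1 (Set.Iio 0) = gaussianReal 0 1 (Set.Ici 0) := by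
    conv_lhs => rw [← hneg]
    rw [Measure.map_apply (measurable_const_mul _) measurableSet_Iio, g_Ici_eq_Ioi]
    congr 1
    ext x
    simp only [Set.mem_preimage, Set.mem_Iio, Set.mem_Ioi]
    constructor <;> intro <;> linarith
  have huniv : gaussianReal 0 1 (Set.Iio 0) + gaussianReal 0 1 (Set.Ici 0) = 1 := by
    rw [← measure_union (by
        rw [Set.disjoint_left]
        intro x h1 h2
        simp only [Set.mem_Iio] at h1
        simp only [Set.mem_Ici] at h2
        linarith)
      measurableSet_Ici, Set.Iio_union_Ici, measure_univ]
  rw [hIio] at huniv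
  have := congrArg ENNReal.toReal huniv
  rw [ENNReal.toReal_add (measure_ne_top _ _) (measure_ne_top _ _), ENNReal.toReal_one] at this
  linarith

lemma Ico_toReal (s : ℝ) : ((gaussianReal 0 1) (Set.Ico 0 s)).toReal
    = ∫ x in Set.Ico 0 s, gaussianPDFReal 0 1 x := by
  rw [gaussianReal_apply_eq_integral 0 one_ne_zero,
    ENNReal.toReal_ofReal (integral_nonneg fun x => gaussianPDFReal_nonneg _ _ _)]

lemma Q_eq (s : ℝ) (hs : 0 ≤ s) :
    ((gaussianReal 0 1) (Set.Ici s)).toReal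
      = 1/2 - ∫ x in Set.Ico 0 s, gaussianPDFReal 0 1 x := by
  have hsplit : gaussianReal 0 1 (Set.Ici 0)
      = gaussianReal 0 1 (Set.Ico 0 s) + gaussianReal 0 1 (Set.Ici s) := by
    rw [← measure_union (by
        rw [Set.disjoint_left]
        intro x h1 h2
        simp only [Set.mem_Ico] at h1
        simp only [Set.mem_Ici] at h2
        linarith [h1.2]) measurableSet_Ici, Set.Ico_union_Ici_eq_Ici hs]
  have := congrArg ENNReal.toReal hsplit
  rw [ENNReal.toReal_add (measure_ne_top _ _) (measure_ne_top _ _), half, Ico_toReal] at this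
  linarith

lemma pdf_le (x : ℝ) : gaussianPDFReal 0 1 x ≤ (Real.sqrt (2 * π))⁻¹ := by
  simp only [gaussianPDFReal, sub_zero, NNReal.coe_one, mul_one]
  have h1 : Real.exp (-x ^ 2 / 2) ≤ 1 := Real.exp_le_one_iff.mpr (by nlinarith [sq_nonneg x])
  have h2 : (0:ℝ) ≤ (Real.sqrt (2 * π))⁻¹ := by positivity
  calc (Real.sqrt (2 * π))⁻¹ * Real.exp (-x ^ 2 / 2) ≤ (Real.sqrt (2 * π))⁻¹ * 1 :=
        mul_le_mul_of_nonneg_left h1 h2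
    _ = (Real.sqrt (2 * π))⁻¹ := mul_one _

lemma B_le (t : ℝ) (ht0 : 0 ≤ t) :
    ∫ x in Set.Ico 0 t, gaussianPDFReal 0 1 x ≤ t * (Real.sqrt (2 * π))⁻¹ := by
  have h1 : ∫ x in Set.Ico 0 t, gaussianPDFReal 0 1 x
      ≤ ∫ _x in Set.Ico 0 t, (Real.sqrt (2 * π))⁻¹ := by
    refine setIntegral_mono_on (integrable_gaussianPDFReal 0 1).integrableOn
      (integrableOn_const measure_Ico_lt_top.ne) measurableSet_Ico ?_
    exact fun x _ => pdf_le x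
  rw [setIntegral_const, measureReal_def, Real.volume_Ico, sub_zero, ENNReal.toReal_ofReal ht0,
    smul_eq_mul] at h1
  exact h1

lemma A_ge (s : ℝ) (hs : 0 ≤ s) :
    s * gaussianPDFReal 0 1 s ≤ ∫ x in Set.Ico 0 s, gaussianPDFReal 0 1 x := by
  have h1 : ∫ _x in Set.Ico 0 s, gaussianPDFReal 0 1 s
      ≤ ∫ x in Set.Ico 0 s, gaussianPDFReal 0 1 x := by
    refine setIntegral_mono_on (integrableOn_const measure_Ico_lt_top.ne)
      (integrable_gaussianPDFReal 0 1).integrableOn measurableSet_Ico ?_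
    intro x hx
    simp only [Set.mem_Ico] at hx
    simp only [gaussianPDFReal, sub_zero, NNReal.coe_one, mul_one]
    have hxx : x ^ 2 ≤ s ^ 2 := by nlinarith [hx.1, hx.2]
    have : Real.exp (-s ^ 2 / 2) ≤ Real.exp (-x ^ 2 / 2) := Real.exp_le_exp.mpr (by linarith)
    exact mul_le_mul_of_nonneg_left this (by positivity)
  rw [setIntegral_const, measureReal_def, Real.volume_Ico, sub_zero, ENNReal.toReal_ofReal hs,
    smul_eq_mul] at h1
  exact h1

lemma key (t : ℝ) (ht0 : 0 ≤ t) (ht : t < 1/2) :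
    Real.sqrt 2 * ((gaussianReal 0 1) (Set.Ici (t / Real.sqrt 2))).toReal
      ≤ 2 * ((gaussianReal 0 1) (Set.Ici t)).toReal := by
  have h2 : (0:ℝ) < Real.sqrt 2 := Real.sqrt_pos.mpr (by norm_num)
  set c : ℝ := (Real.sqrt (2 * π))⁻¹ with hc
  have hπ : (3.14:ℝ) < π := Real.pi_gt_d2
  have hcpos : (0:ℝ) < c := by positivity
  have hsqrt2pi : (5/2:ℝ) ≤ Real.sqrt (2 * π) := by
    rw [show (5/2:ℝ) = Real.sqrt ((5/2)^2) from (Real.sqrt_sq (by norm_num)).symm]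
    exact Real.sqrt_le_sqrt (by nlinarith)
  have hcle : c ≤ 2/5 := by
    rw [hc, show (2/5:ℝ) = (5/2:ℝ)⁻¹ by norm_num]
    exact inv_anti₀ (by norm_num) hsqrt2pi
  have hs2 : Real.sqrt 2 ≤ 3/2 := by
    rw [show (3/2:ℝ) = Real.sqrt ((3/2)^2) from (Real.sqrt_sq (by norm_num)).symm]
    exact Real.sqrt_le_sqrt (by norm_num)
  have hts : 0 ≤ t / Real.sqrt 2 := div_nonneg ht0 h2.le
  -- pdf lower bound at t/√2
  have hpdf : 15/16 * c ≤ gaussianPDFReal 0 1 (t / Real.sqrt 2) := by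
    simp only [gaussianPDFReal, sub_zero, NNReal.coe_one, mul_one, ← hc]
    have hsq : (t / Real.sqrt 2) ^ 2 = t ^ 2 / 2 := by
      rw [div_pow, Real.sq_sqrt (by norm_num : (0:ℝ) ≤ 2)]
    have ht2 : t ^ 2 ≤ 1/4 := by nlinarith
    have hexp : (15/16:ℝ) ≤ Real.exp (-(t / Real.sqrt 2) ^ 2 / 2) := by
      have h1 : (-(t / Real.sqrt 2) ^ 2 / 2 : ℝ) = -(t^2/4) := by rw [hsq]; ring
      rw [h1]
      calc (15/16:ℝ) ≤ 1 + (-(t^2/4)) := by linarith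
        _ ≤ Real.exp (-(t^2/4)) := by linarith [Real.add_one_le_exp (-(t^2/4))]
    calc 15/16 * c = c * (15/16) := by ring
      _ ≤ c * Real.exp (-(t / Real.sqrt 2) ^ 2 / 2) :=
          mul_le_mul_of_nonneg_left hexp hcpos.le
  have hA := A_ge (t / Real.sqrt 2) hts
  have hB := B_le t ht0
  have hQ1 := Q_eq (t / Real.sqrt 2) hts
  have hQ2 := Q_eq t ht0
  set A := ∫ x in Set.Ico 0 (t / Real.sqrt 2), gaussianPDFReal 0 1 x
  set B := ∫ x in Set.Ico 0 t, gaussianPDFReal 0 1 x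
  have hA2 : t * (15/16 * c) ≤ Real.sqrt 2 * A := by
    have step1 : t / Real.sqrt 2 * (15/16 * c) ≤ A := by
      calc t / Real.sqrt 2 * (15/16 * c)
          ≤ t / Real.sqrt 2 * gaussianPDFReal 0 1 (t / Real.sqrt 2) :=
            mul_le_mul_of_nonneg_left hpdf hts
        _ ≤ A := hA
    have := mul_le_mul_of_nonneg_left step1 h2.le
    calc t * (15/16 * c) = Real.sqrt 2 * (t / Real.sqrt 2 * (15/16 * c)) := by
          field_simp
        _ ≤ Real.sqrt 2 * A := this
  rw [hQ1, hQ2]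
  have htc : t * c ≤ 1/5 := by nlinarith
  nlinarith [mul_nonneg ht0 hcpos.le]

theorem stmt_12 (t : ℝ) (ht0 : 0 ≤ t) (ht : t < 1 / 2) :
    (∫ x in Set.Ioi t, Real.exp (x ^ 2 / 4) ∂(gaussianReal 0 1)) /
        ((gaussianReal 0 1) (Set.Ioi t)).toReal =
      Real.sqrt 2 * ((gaussianReal 0 1) (Set.Ici (t / Real.sqrt 2))).toReal /
        ((gaussianReal 0 1) (Set.Ici t)).toReal ∧
    (∫ x in Set.Ioi t, Real.exp (x ^ 2 / 4) ∂(gaussianReal 0 1)) /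
        ((gaussianReal 0 1) (Set.Ioi t)).toReal ≤ 2 ∧
    sInf {w : ℝ | 0 < w ∧
        ∫ x, Real.exp (x ^ 2 / w ^ 2) ∂((gaussianReal 0 1)[|Set.Ioi t]) ≤ 2} ≤ 2 := by
  have hQpos : 0 < ((gaussianReal 0 1) (Set.Ioi t)).toReal := by
    refine ENNReal.toReal_pos ?_ (measure_ne_top _ _)
    intro h0
    have := gaussianReal_absolutelyContinuous' 0 one_ne_zero h0
    rw [Real.volume_Ioi] at this
    exact ENNReal.top_ne_zero this
  have heq : (∫ x in Set.Ioi t, Real.exp (x ^ 2 / 4) ∂(gaussianReal 0 1)) /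
        ((gaussianReal 0 1) (Set.Ioi t)).toReal =
      Real.sqrt 2 * ((gaussianReal 0 1) (Set.Ici (t / Real.sqrt 2))).toReal /
        ((gaussianReal 0 1) (Set.Ici t)).toReal := by
    rw [numerator t, g_Ici_eq_Ioi t]
  have hle : (∫ x in Set.Ioi t, Real.exp (x ^ 2 / 4) ∂(gaussianReal 0 1)) /
        ((gaussianReal 0 1) (Set.Ioi t)).toReal ≤ 2 := by
    rw [div_le_iff₀ hQpos, numerator t, ← g_Ici_eq_Ioi t]
    exact key t ht0 (by linarith)
  refine ⟨heq, hle, ?_⟩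
  have hmem : (2:ℝ) ∈ {w : ℝ | 0 < w ∧
      ∫ x, Real.exp (x ^ 2 / w ^ 2) ∂((gaussianReal 0 1)[|Set.Ioi t]) ≤ 2} := by
    refine ⟨by norm_num, ?_⟩
    have hcond : ∫ x, Real.exp (x ^ 2 / (2:ℝ) ^ 2) ∂((gaussianReal 0 1)[|Set.Ioi t])
        = (∫ x in Set.Ioi t, Real.exp (x ^ 2 / 4) ∂(gaussianReal 0 1)) /
          ((gaussianReal 0 1) (Set.Ioi t)).toReal := by
      rw [ProbabilityTheory.cond, integral_smul_measure, ENNReal.toReal_inv, smul_eq_mul]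
      rw [show ((2:ℝ)^2) = 4 by norm_num, inv_mul_eq_div]
    rw [hcond]
    exact hle
  exact csInf_le ⟨0, fun w hw => hw.1.le⟩ hmem
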